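/- Let X be a real-valued random variable with finite support, and let α = min{ Pr[X = x] : x ∈ ℝ, Pr[X = x] ≠ 0 } be the mass of its smallest atom. Then μ₄(X) ≤ (1/α)·(μ₂(X))²; equivalently, X is (c,2,4)-hypercontractive with c = α^{−1/4}. -/

import Mathlib

open MeasureTheory ProbabilityTheory

/-- The `j`-th absolute central moment `μ_j(X) = E[|X - E[X]|^j]`. -/
noncomputable def absCentralMoment {Ω : Type*} [MeasurableSpace Ω] (μ : Measure Ω)
    (X : Ω → ℝ) (j : ℕ) : ℝ :=
  ∫ ω, |X ω - ∫ ω', X ω' ∂μ| ^ j ∂μ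

/-- `X` is `(c,2,4)`-hypercontractive if `μ₄(X) ≤ c⁴ ⬝ μ₂(X)²`. -/
def Hypercontractive {Ω : Type*} [MeasurableSpace Ω] (μ : Measure Ω)
    (X : Ω → ℝ) (c : ℝ) : Prop :=
  absCentralMoment μ X 4 ≤ c ^ 4 * (absCentralMoment μ X 2) ^ 2

/-- A finitely supported random variable whose smallest atom has mass `α` is
`(α^{-1/4},2,4)`-hypercontractive, i.e. `μ₄(X) ≤ (1/α) μ₂(X)²`. -/
theorem hypercontractive_of_finite_support
    {Ω : Type*} [MeasurableSpace Ω] (μ : Measure Ω) [IsProbabilityMeasure μ]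
    (X : Ω → ℝ) (hX : Measurable X)
    (s : Finset ℝ) (hs : ∀ ω, X ω ∈ (s : Set ℝ))
    (α : ℝ)
    (hα : IsLeast {p : ℝ | ∃ x : ℝ, (μ {ω | X ω = x}).toReal = p ∧ p ≠ 0} α) :
    absCentralMoment μ X 4 ≤ (1 / α) * (absCentralMoment μ X 2) ^ 2 ∧
      Hypercontractive μ X (α ^ (-(1 / 4 : ℝ))) := by
  classical
  set m := ∫ ω', X ω' ∂μ with hm
  obtain ⟨⟨x₀, hx₀, hx₀ne⟩, hlb⟩ := hα
  have hαpos : 0 < α := lt_of_le_of_ne (hx₀ ▸ ENNReal.toReal_nonneg) (Ne.symm hx₀ne)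
  set C : ℝ := ∑ x ∈ s, |x - m| with hC
  have hbound : ∀ ω, |X ω - m| ≤ C :=
    fun ω => Finset.single_le_sum (f := fun x => |x - m|) (fun x _ => abs_nonneg _) (Finset.mem_coe.mp (hs ω))
  have hmeas : ∀ k : ℕ, Integrable (fun ω => |X ω - m| ^ k) μ := by
    intro k
    refine (integrable_const (C ^ k)).mono' ?_ ?_
    · exact ((hX.sub measurable_const).abs.pow_const k).aestronglyMeasurable
    · filter_upwards with ω
      rw [Real.norm_eq_abs, abs_pow, abs_abs]
      exact pow_le_pow_left₀ (abs_nonneg _) (hbound ω) k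
  set μ2 : ℝ := absCentralMoment μ X 2 with hμ2
  have hμ2eq : μ2 = ∫ ω, (X ω - m) ^ 2 ∂μ := by
    simp [hμ2, absCentralMoment, sq_abs, hm]
  have hint2 : Integrable (fun ω => (X ω - m) ^ 2) μ := by
    simpa [sq_abs] using hmeas 2
  have hint4 : Integrable (fun ω => (X ω - m) ^ 4) μ := by
    simpa [Even.pow_abs (⟨2, rfl⟩ : Even 4)] using hmeas 4
  have key : ∀ x : ℝ, (μ {ω | X ω = x}).toReal ≠ 0 → (x - m) ^ 2 * α ≤ μ2 := by
    intro x hx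
    have hαle : α ≤ (μ {ω | X ω = x}).toReal := hlb ⟨x, rfl, hx⟩
    have hsetmeas : MeasurableSet {ω | X ω = x} := hX (measurableSet_singleton x)
    have h1 : ∫ ω in {ω | X ω = x}, (X ω - m) ^ 2 ∂μ
        = (μ {ω | X ω = x}).toReal * (x - m) ^ 2 := by
      rw [setIntegral_congr_fun hsetmeas (g := fun _ => (x - m) ^ 2) (fun ω hω => by
          simp only [Set.mem_setOf_eq] at hω; rw [hω]),
        setIntegral_const, smul_eq_mul, measureReal_def]
    have h2 : ∫ ω in {ω | X ω = x}, (X ω - m) ^ 2 ∂μ ≤ ∫ ω, (X ω - m) ^ 2 ∂μ :=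
      setIntegral_le_integral hint2 (Filter.Eventually.of_forall fun ω => sq_nonneg _)
    calc (x - m) ^ 2 * α ≤ (x - m) ^ 2 * (μ {ω | X ω = x}).toReal :=
          mul_le_mul_of_nonneg_left hαle (sq_nonneg _)
      _ = ∫ ω in {ω | X ω = x}, (X ω - m) ^ 2 ∂μ := by rw [h1, mul_comm]
      _ ≤ μ2 := by rw [hμ2eq]; exact h2
  have hae : ∀ᵐ ω ∂μ, (μ {ω' | X ω' = X ω}).toReal ≠ 0 := by
    have hnull : μ (⋃ x ∈ s.filter (fun x => (μ {ω | X ω = x}).toReal = 0),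
        {ω | X ω = x}) = 0 := by
      refine (measure_biUnion_null_iff (s.filter _).countable_toSet).mpr ?_
      intro x hx
      have hx0 := (Finset.mem_filter.mp hx).2
      rwa [ENNReal.toReal_eq_zero_iff, or_iff_left (measure_ne_top μ _)] at hx0
    rw [ae_iff]
    refine measure_mono_null (fun ω hω => ?_) hnull
    simp only [Set.mem_setOf_eq, not_not] at hω
    exact Set.mem_biUnion (Finset.mem_filter.mpr ⟨Finset.mem_coe.mp (hs ω), hω⟩) rfl
  have haebound : ∀ᵐ ω ∂μ, (X ω - m) ^ 4 ≤ (μ2 / α) * (X ω - m) ^ 2 := by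
    filter_upwards [hae] with ω hω
    have h' : (X ω - m) ^ 2 ≤ μ2 / α := (le_div_iff₀ hαpos).mpr (key (X ω) hω)
    calc (X ω - m) ^ 4 = (X ω - m) ^ 2 * (X ω - m) ^ 2 := by ring
      _ ≤ (μ2 / α) * (X ω - m) ^ 2 := mul_le_mul_of_nonneg_right h' (sq_nonneg _)
  have hmain : absCentralMoment μ X 4 ≤ (1 / α) * μ2 ^ 2 := by
    have h4 : absCentralMoment μ X 4 = ∫ ω, (X ω - m) ^ 4 ∂μ := by
      simp [absCentralMoment, Even.pow_abs (⟨2, rfl⟩ : Even 4), hm]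
    rw [h4]
    calc ∫ ω, (X ω - m) ^ 4 ∂μ ≤ ∫ ω, (μ2 / α) * (X ω - m) ^ 2 ∂μ :=
          integral_mono_ae hint4 (hint2.const_mul _) haebound
      _ = (μ2 / α) * μ2 := by rw [integral_const_mul, ← hμ2eq]
      _ = (1 / α) * μ2 ^ 2 := by ring
  refine ⟨hmain, ?_⟩
  unfold Hypercontractive
  have hc : (α ^ (-(1 / 4 : ℝ))) ^ (4 : ℕ) = 1 / α := by
    rw [← Real.rpow_natCast (α ^ (-(1 / 4 : ℝ))) 4, ← Real.rpow_mul hαpos.le]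
    norm_num [Real.rpow_neg_one]
  rw [hc]
  exact hmain
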